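/- The closed midpoint convex reflection subspaces of Euclidean space E^n = (ℝ^n, μ_E), μ_E(x,y) = 2x − y, are exactly the affine subspaces of ℝ^n (translates of linear subspaces). -/

import Mathlib

lemma dyadic_full (T : Set ℝ) (hT : IsClosed T) (h0 : (0:ℝ) ∈ T) (h1 : (1:ℝ) ∈ T)
    (hrefl : ∀ a ∈ T, ∀ b ∈ T, 2*a - b ∈ T)
    (hmid : ∀ a ∈ T, ∀ b ∈ T, (a+b)/2 ∈ T) :
    ∀ x : ℝ, x ∈ T := by
  have hint : ∀ k : ℤ, (k:ℝ) ∈ T := by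
    have key : ∀ k : ℤ, (k:ℝ) ∈ T ∧ ((k:ℝ)+1) ∈ T := by
      intro k
      induction k using Int.induction_on with
      | zero => exact ⟨by simpa using h0, by simpa using h1⟩
      | succ n ih =>
        refine ⟨by push_cast at ih ⊢; exact ih.2, ?_⟩
        have := hrefl _ ih.2 _ ih.1
        push_cast at this ⊢
        convert this using 1; ring
      | pred n ih =>
        have h2 := hrefl _ ih.1 _ ih.2
        constructor
        · push_cast at h2 ⊢; convert h2 using 1; ring
        · push_cast at ih ⊢; convert ih.1 using 1; ring
    exact fun k => (key k).1
  have hdy : ∀ (m : ℕ) (k : ℤ), (k:ℝ)/2^m ∈ T := by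
    intro m
    induction m with
    | zero => intro k; simpa using hint k
    | succ m ih =>
      intro k
      have := hmid _ (ih k) _ h0
      convert this using 1
      ring
  intro x
  have : x ∈ closure T := by
    rw [Metric.mem_closure_iff]
    intro ε hε
    obtain ⟨m, hm⟩ := exists_pow_lt_of_lt_one hε (by norm_num : (1:ℝ)/2 < 1)
    refine ⟨(⌊x * 2^m⌋ : ℝ)/2^m, hdy m _, ?_⟩
    have h2m : (0:ℝ) < 2^m := by positivity
    have hfl := Int.floor_le (x * 2^m)
    have hfu := Int.lt_floor_add_one (x * 2^m)
    have h1m : (1:ℝ)/2^m < ε := by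
      calc (1:ℝ)/2^m = (1/2)^m := by rw [div_pow]; norm_num
        _ < ε := hm
    have hle : (⌊x * 2^m⌋ : ℝ)/2^m ≤ x := by
      rw [div_le_iff₀ h2m]; linarith
    have hlt : x - (⌊x * 2^m⌋ : ℝ)/2^m < 1/2^m := by
      rw [sub_lt_iff_lt_add, ← add_div, lt_div_iff₀ h2m]
      linarith
    rw [Real.dist_eq, abs_lt]
    constructor <;> linarith
  rwa [hT.closure_eq] at this

/-- The closed midpoint convex reflection subspaces of Euclidean space `E^n`
(with `μ_E(x,y) = 2x − y`) are exactly the affine subspaces of `ℝ^n`. -/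
theorem stmt_8 (n : ℕ) (Y : Set (Fin n → ℝ)) :
    (IsClosed Y ∧
      (∀ x ∈ Y, ∀ y ∈ Y, (2 : ℝ) • x - y ∈ Y) ∧
      (∀ p ∈ Y, ∀ q ∈ Y, ∃ z ∈ Y, (2 : ℝ) • z - p = q)) ↔
    ∃ S : AffineSubspace ℝ (Fin n → ℝ), Y = (S : Set (Fin n → ℝ)) := by
  constructor
  · rintro ⟨hcl, hrefl, hmidex⟩
    -- midpoints
    have hmid : ∀ p ∈ Y, ∀ q ∈ Y, ((1:ℝ)/2) • (p + q) ∈ Y := by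
      intro p hp q hq
      obtain ⟨z, hz, hzeq⟩ := hmidex p hp q hq
      have : z = ((1:ℝ)/2) • (p + q) := by
        have h2 : (2:ℝ) • z = q + p := by
          rw [← hzeq]; module
        linear_combination (norm := module) ((1:ℝ)/2) • h2
      rwa [this] at hz
    rcases Set.eq_empty_or_nonempty Y with h | ⟨p₀, hp₀⟩
    · exact ⟨⊥, by rw [h, AffineSubspace.bot_coe]⟩
    · refine ⟨⟨Y, ?_⟩, rfl⟩
      intro c x y z hx hy hz
      have hv : x -ᵥ y = x - y := rfl
      have ha : ∀ w : Fin n → ℝ, w +ᵥ z = w + z := fun _ => rfl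
      set T : Set ℝ := {c : ℝ | c • (x - y) + z ∈ Y} with hTdeF
      have hTc : IsClosed T := by
        have : Continuous fun c : ℝ => c • (x - y) + z := by continuity
        exact hcl.preimage this
      have h0T : (0:ℝ) ∈ T := by
        show (0:ℝ) • (x - y) + z ∈ Y
        simpa using hz
      have h1T : (1:ℝ) ∈ T := by
        show (1:ℝ) • (x - y) + z ∈ Y
        have hm := hmid x hx z hz
        have hr := hrefl _ hm y hy
        have : (2:ℝ) • (((1:ℝ)/2) • (x + z)) - y = (1:ℝ) • (x - y) + z := by
          module
        rwa [this] at hr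
      have hrT : ∀ a ∈ T, ∀ b ∈ T, 2*a - b ∈ T := by
        intro a ha' b hb'
        have hr := hrefl _ ha' _ hb'
        show (2*a - b) • (x - y) + z ∈ Y
        have : (2:ℝ) • (a • (x - y) + z) - (b • (x - y) + z)
            = (2*a - b) • (x - y) + z := by module
        rwa [this] at hr
      have hmT : ∀ a ∈ T, ∀ b ∈ T, (a+b)/2 ∈ T := by
        intro a ha' b hb'
        have hm := hmid _ ha' _ hb'
        show ((a+b)/2) • (x - y) + z ∈ Y
        have : ((1:ℝ)/2) • ((a • (x - y) + z) + (b • (x - y) + z))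
            = ((a+b)/2) • (x - y) + z := by
          rw [div_eq_mul_inv, div_eq_mul_inv]; module
        rwa [this] at hm
      have := dyadic_full T hTc h0T h1T hrT hmT c
      show c • (x -ᵥ y) +ᵥ z ∈ Y
      rw [hv, ha]
      exact this
  · rintro ⟨S, rfl⟩
    refine ⟨S.closed_of_finiteDimensional, ?_, ?_⟩
    · intro x hx y hy
      have := S.smul_vsub_vadd_mem 2 hx hy hy
      have he : (2:ℝ) • (x -ᵥ y) +ᵥ y = (2:ℝ) • x - y := by
        show (2:ℝ) • (x - y) + y = (2:ℝ) • x - y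
        module
      rwa [he] at this
    · intro p hp q hq
      refine ⟨((1:ℝ)/2) • (q -ᵥ p) +ᵥ p, S.smul_vsub_vadd_mem _ hq hp hp, ?_⟩
      show (2:ℝ) • (((1:ℝ)/2) • (q - p) + p) - p = q
      module
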